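/- Let r ≥ 3 and let X : [t₀, ∞) → ℝⁿ (with t₀ > 0) be a twice continuously differentiable solution of the A-ADMM flow AᵀA (Ẍ(t) + (r/t) Ẋ(t)) + ∇V(X(t)) = 0, and let X⋆ be a minimizer of V. Then for all t ≥ t₀, ‖A(X(t) − X⋆ + (t/(r−1)) Ẋ(t))‖² ≤ 2 ℰ(t₀), where ℰ(t) = (t/(r−1))²·(V(X(t)) − V(X⋆)) + ½‖A(X(t) − X⋆ + (t/(r−1)) Ẋ(t))‖². -/

import Mathlib

open Matrix Set

open scoped RealInnerProductSpace

/-- First-order condition for a differentiable convex function on an inner product space. -/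
lemma convex_gradient_ineq {F : Type*} [NormedAddCommGroup F] [InnerProductSpace ℝ F]
    [CompleteSpace F] {V : F → ℝ} (hconv : ConvexOn ℝ Set.univ V)
    (hd : Differentiable ℝ V) (x y : F) :
    V x + ⟪gradient V x, y - x⟫ ≤ V y := by
  have hG : HasFDerivAt V (InnerProductSpace.toDual ℝ F (gradient V x)) x :=
    hasGradientAt_iff_hasFDerivAt.mp (hd x).hasGradientAt
  set line : ℝ → F := fun s => s • (y - x) + x with hline
  have hline0 : line 0 = x := by simp [hline]
  have hline1 : line 1 = y := by simp [hline]
  have hlined : HasDerivAt line (y - x) 0 := by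
    simpa [hline] using ((hasDerivAt_id (0 : ℝ)).smul_const (y - x)).add_const x
  have hφ : HasDerivAt (V ∘ line) ⟪gradient V x, y - x⟫ 0 := by
    have hG' : HasFDerivAt V (InnerProductSpace.toDual ℝ F (gradient V x)) (line 0) := by
      rw [hline0]; exact hG
    have := hG'.comp_hasDerivAt 0 hlined
    simpa [InnerProductSpace.toDual_apply_apply] using this
  have hφconv : ConvexOn ℝ Set.univ (V ∘ line) := by
    have h := hconv.comp_affineMap
      ((LinearMap.toAffineMap (LinearMap.smulRight (LinearMap.id : ℝ →ₗ[ℝ] ℝ) (y - x))) +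
        AffineMap.const ℝ ℝ x)
    exact h
  have hslope := hφconv.le_slope_of_hasDerivAt (mem_univ (0 : ℝ)) (mem_univ (1 : ℝ))
    one_pos hφ
  rw [slope_def_field] at hslope
  simp only [Function.comp, hline0, hline1] at hslope
  have : ⟪gradient V x, y - x⟫ ≤ V y - V x := by
    simpa using hslope
  linarith

set_option maxHeartbeats 1000000 in
/-- **Boundedness of the mixed term in the A-ADMM Lyapunov function.**
Let `r ≥ 3` and let `X` be a twice continuously differentiable solution of the A-ADMM
flow `AᵀA(Ẍ(t) + (r/t)Ẋ(t)) + ∇V(X(t)) = 0` on `[t₀, ∞)` (with `t₀ > 0`), and let `X⋆`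
be a minimizer of `V`. Then for all `t ≥ t₀`,
`‖A(X(t) − X⋆ + (t/(r−1))Ẋ(t))‖² ≤ 2ℰ(t₀)`, where
`ℰ(t) = (t/(r−1))²(V(X(t)) − V(X⋆)) + ½‖A(X(t) − X⋆ + (t/(r−1))Ẋ(t))‖²`. -/
theorem aadmm_flow_mixed_term_bound
    {m n : ℕ} (hmn : n ≤ m)
    (f : EuclideanSpace ℝ (Fin n) → ℝ) (g : EuclideanSpace ℝ (Fin m) → ℝ)
    (hf : ContDiff ℝ 1 f) (hg : ContDiff ℝ 1 g)
    (hfconv : ConvexOn ℝ Set.univ f) (hgconv : ConvexOn ℝ Set.univ g)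
    (A : Matrix (Fin m) (Fin n) ℝ) (hA : A.rank = n)
    (V : EuclideanSpace ℝ (Fin n) → ℝ)
    (hV : ∀ x, V x = f x + g (Matrix.toEuclideanLin A x))
    (r : ℝ) (hr : 3 ≤ r)
    (t₀ : ℝ) (ht₀ : 0 < t₀)
    (X X' X'' : ℝ → EuclideanSpace ℝ (Fin n))
    (hX : ∀ t ∈ Set.Ici t₀, HasDerivAt X (X' t) t)
    (hX' : ∀ t ∈ Set.Ici t₀, HasDerivAt X' (X'' t) t)
    (hX'' : ContinuousOn X'' (Set.Ici t₀))
    (hflow : ∀ t ∈ Set.Ici t₀,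
      Matrix.toEuclideanLin (Aᵀ * A) (X'' t + (r / t) • X' t) + gradient V (X t) = 0)
    (Xstar : EuclideanSpace ℝ (Fin n)) (hXstar : ∀ x, V Xstar ≤ V x)
    (E : ℝ → ℝ)
    (hE : ∀ t, E t = (t / (r - 1)) ^ 2 * (V (X t) - V Xstar)
      + (1 / 2) *
        ‖Matrix.toEuclideanLin A (X t - Xstar + (t / (r - 1)) • X' t)‖ ^ 2) :
    ∀ t ∈ Set.Ici t₀,
      ‖Matrix.toEuclideanLin A (X t - Xstar + (t / (r - 1)) • X' t)‖ ^ 2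
        ≤ 2 * E t₀ := by
  set c : ℝ := r - 1 with hcdef
  have hc2 : (2 : ℝ) ≤ c := by simp only [hcdef]; linarith
  have hc0 : (0 : ℝ) < c := by linarith
  have hcne : c ≠ 0 := ne_of_gt hc0
  -- differentiability and convexity of V
  have hVfun : V = fun x => f x + g (Matrix.toEuclideanLin A x) := funext hV
  have hLd : Differentiable ℝ (fun x => Matrix.toEuclideanLin A x) :=
    (LinearMap.toContinuousLinearMap (Matrix.toEuclideanLin A)).differentiable
  have hVd : Differentiable ℝ V := by
    rw [hVfun]
    exact (hf.differentiable one_ne_zero).add ((hg.differentiable one_ne_zero).comp hLd)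
  have hVconv : ConvexOn ℝ Set.univ V := by
    rw [hVfun]
    refine hfconv.add ?_
    have h := hgconv.comp_affineMap (LinearMap.toAffineMap (Matrix.toEuclideanLin A))
    exact h
  -- abbreviations
  set L : EuclideanSpace ℝ (Fin n) →ₗ[ℝ] EuclideanSpace ℝ (Fin m) :=
    Matrix.toEuclideanLin A with hLdef
  set w : ℝ → EuclideanSpace ℝ (Fin n) := fun t => X t - Xstar + (t / c) • X' t with hwdef
  set G : ℝ → EuclideanSpace ℝ (Fin n) := fun t => gradient V (X t) with hGdef
  set D : ℝ → ℝ := fun t => V (X t) - V Xstar with hDdef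
  have hD0 : ∀ t, 0 ≤ D t := fun t => sub_nonneg.mpr (hXstar (X t))
  have hEfun : E = fun t => (t / c) ^ 2 * D t + (1 / 2) * ‖L (w t)‖ ^ 2 := by
    funext t; rw [hE]
  -- key derivative computation
  have key : ∀ t ∈ Set.Ici t₀,
      HasDerivAt E (2 * t / c ^ 2 * D t - (t / c) * ⟪G t, X t - Xstar⟫) t := by
    intro t ht
    have ht0 : (0 : ℝ) < t := lt_of_lt_of_le ht₀ ht
    have htne : t ≠ 0 := ne_of_gt ht0
    have h2 : HasDerivAt (fun s : ℝ => s / c) (1 / c) t := by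
      simpa using (hasDerivAt_id t).div_const c
    -- derivative of w
    have hw' : HasDerivAt w ((t / c) • (X'' t + (r / t) • X' t)) t := by
      have h1 : HasDerivAt (fun s => X s - Xstar) (X' t) t := (hX t ht).sub_const _
      have h3 : HasDerivAt (fun s : ℝ => (s / c) • X' s)
          ((t / c) • X'' t + (1 / c) • X' t) t := h2.smul (hX' t ht)
      have h4 := h1.add h3
      refine h4.congr_deriv ?_
      have e1 : t / c * (r / t) = 1 + 1 / c := by
        have hrne : r - 1 ≠ 0 := by rw [← hcdef]; exact hcne
        rw [hcdef]
        field_simp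
        ring
      rw [smul_add, smul_smul, e1, add_smul, one_smul]
      abel
    -- derivative of V ∘ X
    have hVX : HasDerivAt (fun s => V (X s)) ⟪G t, X' t⟫ t := by
      have hG : HasFDerivAt V (InnerProductSpace.toDual ℝ _ (G t)) (X t) :=
        hasGradientAt_iff_hasFDerivAt.mp (hVd (X t)).hasGradientAt
      have := hG.comp_hasDerivAt t (hX t ht)
      exact (by simpa [InnerProductSpace.toDual_apply_apply] using this : HasDerivAt (V ∘ X) ⟪G t, X' t⟫ t)
    have hDd : HasDerivAt D ⟪G t, X' t⟫ t := hVX.sub_const _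
    -- derivative of the quadratic factor
    have hq : HasDerivAt (fun s : ℝ => (s / c) ^ 2) (2 * t / c ^ 2) t := by
      have := h2.pow 2
      refine this.congr_deriv ?_
      field_simp
      rw [show (2:ℕ) - 1 = 1 from rfl, pow_one]; push_cast
      have hct : c * (t / c) = t := by field_simp
      linear_combination 2 * hct
    -- derivative of the norm-squared term
    have hLw : HasDerivAt (fun s => L (w s)) (L ((t / c) • (X'' t + (r / t) • X' t))) t :=
      (LinearMap.toContinuousLinearMap L).hasFDerivAt.comp_hasDerivAt t hw'
    have hnorm : HasDerivAt (fun s => ‖L (w s)‖ ^ 2)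
        (2 * ⟪L (w t), L ((t / c) • (X'' t + (r / t) • X' t))⟫) t := by
      have h := hLw.inner ℝ hLw
      have hfn : (fun s => ‖L (w s)‖ ^ 2)
          = fun s => ⟪L (w s), L (w s)⟫ := by
        funext s; rw [real_inner_self_eq_norm_sq]
      rw [hfn]
      refine h.congr_deriv ?_
      rw [real_inner_comm (L (w t))]
      ring
    -- combine
    have hEd := (hq.mul hDd).add (hnorm.const_mul (1 / 2 : ℝ))
    replace hEd : HasDerivAt E (2 * t / c ^ 2 * D t + (t / c) ^ 2 * ⟪G t, X' t⟫ + 1 / 2 * (2 * ⟪L (w t), L ((t / c) • (X'' t + (r / t) • X' t))⟫)) t := by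
      rw [hEfun]; exact hEd
    refine hEd.congr_deriv ?_
    -- now equate the two derivative expressions using the flow equation
    have hmulvec : ∀ v, Matrix.toEuclideanLin (Aᵀ * A) v = Matrix.toEuclideanLin Aᵀ (L v) := by
      intro v
      simp [hLdef, Matrix.toEuclideanLin_apply, Matrix.mulVec_mulVec]
    have hadj : ∀ u v, ⟪L v, L u⟫ = ⟪v, Matrix.toEuclideanLin (Aᵀ * A) u⟫ := by
      intro u v
      rw [hmulvec, ← Matrix.conjTranspose_eq_transpose_of_trivial,
        Matrix.toEuclideanLin_conjTranspose_eq_adjoint]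
      exact (LinearMap.adjoint_inner_right _ _ _).symm
    have hflow' : Matrix.toEuclideanLin (Aᵀ * A) (X'' t + (r / t) • X' t) = -(G t) := by
      have h0 := hflow t ht
      have : Matrix.toEuclideanLin (Aᵀ * A) (X'' t + (r / t) • X' t) + G t = 0 := h0
      linear_combination (norm := module) this
    rw [LinearMap.map_smul, real_inner_smul_right, hadj, hflow', inner_neg_right]
    have hwinner : ⟪w t, G t⟫ = ⟪X t - Xstar, G t⟫ + (t / c) * ⟪X' t, G t⟫ := by
      simp only [hwdef, inner_add_left, real_inner_smul_left]
    rw [hwinner, real_inner_comm (X t - Xstar) (G t), real_inner_comm (X' t) (G t)]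
    ring
  -- derivative is nonpositive on the ray
  have hineq : ∀ t ∈ Set.Ici t₀,
      2 * t / c ^ 2 * D t - (t / c) * ⟪G t, X t - Xstar⟫ ≤ 0 := by
    intro t ht
    have ht0 : (0 : ℝ) < t := lt_of_lt_of_le ht₀ ht
    have htc : 0 ≤ t / c := le_of_lt (div_pos ht0 hc0)
    have hfo := convex_gradient_ineq hVconv hVd (X t) Xstar
    have h1 : D t ≤ ⟪G t, X t - Xstar⟫ := by
      have hneg : ⟪G t, Xstar - X t⟫ = -⟪G t, X t - Xstar⟫ := by
        rw [← neg_sub, inner_neg_right]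
      simp only [hDdef, hGdef] at *
      linarith [hfo, hneg ▸ hfo]
    have e : 2 * t / c ^ 2 * D t = (t / c) * D t * (2 / c) := by
      field_simp
    have hdiv : 2 / c ≤ 1 := by rw [div_le_one hc0]; linarith
    have h2 : (t / c) * D t * (2 / c) ≤ (t / c) * D t * 1 :=
      mul_le_mul_of_nonneg_left hdiv (mul_nonneg htc (hD0 t))
    have h3 : (t / c) * D t ≤ (t / c) * ⟪G t, X t - Xstar⟫ :=
      mul_le_mul_of_nonneg_left h1 htc
    rw [e]; linarith
  -- E is antitone
  have hconts : ContinuousOn E (Set.Ici t₀) := fun t ht =>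
    ((key t ht).continuousAt).continuousWithinAt
  have hanti : AntitoneOn E (Set.Ici t₀) := by
    apply antitoneOn_of_deriv_nonpos (convex_Ici t₀) hconts
    · intro x hx
      rw [interior_Ici] at hx
      exact ((key x (mem_Ici.mpr (le_of_lt hx))).differentiableAt).differentiableWithinAt
    · intro x hx
      rw [interior_Ici] at hx
      rw [(key x (mem_Ici.mpr (le_of_lt hx))).deriv]
      exact hineq x (mem_Ici.mpr (le_of_lt hx))
  -- conclude
  intro t ht
  have hEle : E t ≤ E t₀ := hanti self_mem_Ici ht ht
  have hEt := hE t
  have hq : 0 ≤ (t / c) ^ 2 * D t := mul_nonneg (sq_nonneg _) (hD0 t)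
  have hDt : (V (X t) - V Xstar) = D t := rfl
  nlinarith [hEt, hq, hEle]
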